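/- Let v ≤ v̄ and let D(v) = ρ∫∫r²|v−v'|dμ and Γ(v,v̄) = ½(D(v)+D(v̄)−(v̄−v)ρ∫∫r²dμ). Then Γ(v,v̄) ≤ min(D(v), D(v̄)), i.e. the normalized correlation Γ(v,v̄)/√(D(v)D(v̄)) lies in [0,1] whenever D(v),D(v̄) > 0. -/
import Mathlib


open MeasureTheory

lemma integ_aux (μ : Measure (ℝ × ℝ)) [IsProbabilityMeasure μ]
    (hmom : Integrable (fun p : ℝ × ℝ => p.2 ^ 2 * (1 + |p.1|)) μ) (u : ℝ) :
    Integrable (fun p : ℝ × ℝ => p.2 ^ 2 * |u - p.1|) μ := by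
  have hg : Integrable (fun p : ℝ × ℝ => (max 1 |u|) * (p.2 ^ 2 * (1 + |p.1|))) μ :=
    hmom.const_mul _
  refine hg.mono ?_ ?_
  · exact (measurable_snd.pow_const 2).aestronglyMeasurable.mul
      ((measurable_const.sub measurable_fst).abs).aestronglyMeasurable
  · filter_upwards with p
    have h2 : (0:ℝ) ≤ p.2 ^ 2 := sq_nonneg _
    have h1 : |u - p.1| ≤ max 1 |u| * (1 + |p.1|) := by
      have : |u - p.1| ≤ |u| + |p.1| := abs_sub u p.1
      have hmax : |u| ≤ max 1 |u| := le_max_right _ _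
      have h1' : (1:ℝ) ≤ max 1 |u| := le_max_left _ _
      nlinarith [abs_nonneg p.1, abs_nonneg u]
    have habs : abs (max 1 |u|) = max 1 |u| :=
      abs_of_nonneg (le_trans zero_le_one (le_max_left _ _))
    rw [Real.norm_eq_abs, Real.norm_eq_abs, abs_mul, abs_mul, abs_abs,
      abs_of_nonneg h2, abs_mul, abs_of_nonneg h2,
      abs_of_nonneg (by positivity : (0:ℝ) ≤ 1 + |p.1|), habs]
    nlinarith [abs_nonneg p.1, mul_le_mul_of_nonneg_left h1 h2]

/-- `Γ(v,v̄) ≤ min(D(v), D(v̄))`, so the normalized correlation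
`Γ(v,v̄)/√(D(v)D(v̄))` lies in `[0,1]` whenever `D(v), D(v̄) > 0`. -/
theorem Gamma_le_min (μ : Measure (ℝ × ℝ)) [IsProbabilityMeasure μ] (ρ : ℝ) (hρ : 0 < ρ)
    (hmom : Integrable (fun p : ℝ × ℝ => p.2 ^ 2 * (1 + |p.1|)) μ)
    (v vb : ℝ) (hv : v ≤ vb) :
    let D : ℝ → ℝ := fun u => ρ * ∫ p : ℝ × ℝ, p.2 ^ 2 * |u - p.1| ∂μ
    let Γ : ℝ := (1 / 2) * (D v + D vb - (vb - v) * (ρ * ∫ p : ℝ × ℝ, p.2 ^ 2 ∂μ))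
    Γ ≤ min (D v) (D vb) ∧
      (0 < D v → 0 < D vb → Γ / Real.sqrt (D v * D vb) ∈ Set.Icc (0 : ℝ) 1) := by
  intro D Γ
  have hIv := integ_aux μ hmom v
  have hIvb := integ_aux μ hmom vb
  have hJ : Integrable (fun p : ℝ × ℝ => p.2 ^ 2) μ := by
    refine hmom.mono ?_ ?_
    · exact (measurable_snd.pow_const 2).aestronglyMeasurable
    · filter_upwards with p
      rw [Real.norm_eq_abs, Real.norm_eq_abs, abs_of_nonneg (sq_nonneg _),
        abs_of_nonneg (by positivity : (0:ℝ) ≤ p.2 ^ 2 * (1 + |p.1|))]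
      nlinarith [sq_nonneg p.2, abs_nonneg p.1]
  set Iv := ∫ p : ℝ × ℝ, p.2 ^ 2 * |v - p.1| ∂μ with hIvdef
  set Ivb := ∫ p : ℝ × ℝ, p.2 ^ 2 * |vb - p.1| ∂μ with hIvbdef
  set J := ∫ p : ℝ × ℝ, p.2 ^ 2 ∂μ with hJdef
  -- key integral inequalities
  have key1 : Ivb - (vb - v) * J ≤ Iv := by
    have : ∫ p : ℝ × ℝ, (p.2 ^ 2 * |vb - p.1| - (vb - v) * p.2 ^ 2) ∂μ ≤ Iv := by
      refine integral_mono (hIvb.sub (hJ.const_mul _)) hIv ?_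
      intro p
      dsimp only
      have : |vb - p.1| - (vb - v) ≤ |v - p.1| := by
        cases abs_cases (v - p.1) <;> cases abs_cases (vb - p.1) <;> linarith
      nlinarith [sq_nonneg p.2]
    rwa [integral_sub hIvb (hJ.const_mul _), integral_const_mul _ _] at this
  have key2 : Iv - (vb - v) * J ≤ Ivb := by
    have : ∫ p : ℝ × ℝ, (p.2 ^ 2 * |v - p.1| - (vb - v) * p.2 ^ 2) ∂μ ≤ Ivb := by
      refine integral_mono (hIv.sub (hJ.const_mul _)) hIvb ?_
      intro p
      dsimp only
      have : |v - p.1| - (vb - v) ≤ |vb - p.1| := by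
        cases abs_cases (v - p.1) <;> cases abs_cases (vb - p.1) <;> linarith
      nlinarith [sq_nonneg p.2]
    rwa [integral_sub hIv (hJ.const_mul _), integral_const_mul _ _] at this
  have key0 : (vb - v) * J ≤ Iv + Ivb := by
    have : ∫ p : ℝ × ℝ, (vb - v) * p.2 ^ 2 ∂μ ≤
        ∫ p : ℝ × ℝ, (p.2 ^ 2 * |v - p.1| + p.2 ^ 2 * |vb - p.1|) ∂μ := by
      refine integral_mono (hJ.const_mul _) (hIv.add hIvb) ?_
      intro p
      dsimp only
      have : vb - v ≤ |v - p.1| + |vb - p.1| := by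
        cases abs_cases (v - p.1) <;> cases abs_cases (vb - p.1) <;> linarith
      nlinarith [sq_nonneg p.2]
    rwa [integral_add hIv hIvb, integral_const_mul _ _] at this
  have hΓdef : Γ = (1 / 2) * (ρ * Iv + ρ * Ivb - (vb - v) * (ρ * J)) := rfl
  have hDv : D v = ρ * Iv := rfl
  have hDvb : D vb = ρ * Ivb := rfl
  have hΓ0 : 0 ≤ Γ := by
    rw [hΓdef]; nlinarith
  have hΓv : Γ ≤ D v := by
    rw [hΓdef, hDv]; nlinarith
  have hΓvb : Γ ≤ D vb := by
    rw [hΓdef, hDvb]; nlinarith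
  refine ⟨le_min hΓv hΓvb, fun hDv0 hDvb0 => ?_⟩
  have hs : 0 < Real.sqrt (D v * D vb) := Real.sqrt_pos.2 (mul_pos hDv0 hDvb0)
  constructor
  · positivity
  · rw [div_le_one hs]
    have : Γ = Real.sqrt (Γ ^ 2) := (Real.sqrt_sq hΓ0).symm
    rw [this]
    apply Real.sqrt_le_sqrt
    nlinarith
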